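/- arXiv:2203.11323 — 5 statements merged into one kernel-verified Lean document; each statement's English description precedes it below -/
import Mathlib

section
/- Let σ : ℝ → ℝ be a bounded measurable function of bounded variation on ℝ, and let μ : ℝ → ℝ be differentiable at every point, with both μ and its derivative μ' integrable on ℝ. Then μ∗σ is continuously differentiable on ℝ: at every x ∈ ℝ the derivative of μ∗σ exists and equals (μ'∗σ)(x), and moreover the function μ'∗σ is uniformly continuous on ℝ. -/
open MeasureTheory Topology Filter

/-- The convolution `(μ ∗ σ)(x) = ∫ μ(x - y) σ(y) dy`. -/
noncomputable def conv (μ σ : ℝ → ℝ) (x : ℝ) : ℝ := ∫ y : ℝ, μ (x - y) * σ y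

theorem stmt_2 (σ μ : ℝ → ℝ) (M : ℝ)
    (hσmeas : Measurable σ) (hσbound : ∀ x, |σ x| ≤ M)
    (hσBV : eVariationOn σ Set.univ < ⊤)
    (hμdiff : ∀ x, DifferentiableAt ℝ μ x)
    (hμint : Integrable μ) (hμ'int : Integrable (deriv μ)) :
    (∀ x : ℝ, HasDerivAt (conv μ σ) (conv (deriv μ) σ x) x) ∧
    UniformContinuous (conv (deriv μ) σ) := by
  clear hσBV
  set g := deriv μ with hgdef
  set M' : ℝ := M + 1 with hM'def
  have hM' : 0 < M' := lt_of_le_of_lt (le_trans (abs_nonneg _) (hσbound 0)) (lt_add_one M)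
  have hσb' : ∀ x, |σ x| ≤ M' := fun x => (hσbound x).trans (le_add_of_nonneg_right one_pos.le)
  have hgm : Measurable g := measurable_deriv μ
  -- integrability of convolution integrands
  have key_int : ∀ (f : ℝ → ℝ), Integrable f → ∀ x : ℝ,
      Integrable (fun y => f (x - y) * σ y) := by
    intro f hf x
    have := (hf.comp_sub_left x).bdd_mul (c := M') hσmeas.aestronglyMeasurable
      (Eventually.of_forall fun y => by simpa [Real.norm_eq_abs] using hσb' y)
    simpa [mul_comm] using this
  -- L¹ translation continuity
  have hT : ∀ h : ℝ, MeasurePreserving (fun z : ℝ => z + h) volume volume :=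
    fun h => measurePreserving_add_right volume h
  set T : ℝ → C(ℝ, ℝ) := fun h => ⟨fun z => z + h, by continuity⟩ with hTdef
  have hTcont : Continuous T :=
    ContinuousMap.continuous_of_continuous_uncurry _ (continuous_snd.add continuous_fst)
  set F : Lp ℝ 1 (volume : Measure ℝ) := hμ'int.toL1 g with hFdef
  set G : ℝ → Lp ℝ 1 (volume : Measure ℝ) :=
    fun h => Lp.compMeasurePreserving (T h) (hT h) F with hGdef
  have hGcont : Continuous G :=
    Continuous.compMeasurePreservingLp continuous_const hTcont hT (by norm_num)
  have hGcoe : ∀ h : ℝ, (G h : ℝ → ℝ) =ᵐ[volume] fun z => g (z + h) := by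
    intro h
    refine (Lp.coeFn_compMeasurePreserving F (hT h)).trans ?_
    exact (hT h).quasiMeasurePreserving.ae_eq (hμ'int.coeFn_toL1)
  have hGdist : ∀ h : ℝ, dist (G h) (G 0) = ∫ z : ℝ, ‖g (z + h) - g z‖ := by
    intro h
    rw [L1.dist_eq_integral_dist]
    refine integral_congr_ae ?_
    filter_upwards [hGcoe h, hGcoe 0] with z h1 h2
    simp [h1, h2, dist_eq_norm]
  -- the key difference bound
  have hdiff_bound : ∀ a b : ℝ,
      dist (conv g σ a) (conv g σ b) ≤ M' * dist (G (a - b)) (G 0) := by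
    intro a b
    have hInt1 : Integrable (fun y : ℝ => (g (a - y) - g (b - y)) * σ y) := by
      have := (key_int g hμ'int a).sub (key_int g hμ'int b)
      simpa [sub_mul, Pi.sub_def] using this
    have step1 : conv g σ a - conv g σ b = ∫ y : ℝ, (g (a - y) - g (b - y)) * σ y := by
      rw [show conv g σ a - conv g σ b
          = ∫ y : ℝ, (g (a - y) * σ y - g (b - y) * σ y) from
        (integral_sub (key_int g hμ'int a) (key_int g hμ'int b)).symm]
      simp [sub_mul]
    have step2 : ‖∫ y : ℝ, (g (a - y) - g (b - y)) * σ y‖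
        ≤ ∫ y : ℝ, ‖g (a - y) - g (b - y)‖ * M' := by
      refine (norm_integral_le_integral_norm _).trans ?_
      refine integral_mono hInt1.norm
        (((hμ'int.comp_sub_left a).sub (hμ'int.comp_sub_left b)).norm.mul_const M') ?_
      intro y
      simp only [norm_mul]
      exact mul_le_mul_of_nonneg_left (by simpa [Real.norm_eq_abs] using hσb' y)
        (norm_nonneg _) |>.trans_eq rfl
    have step3 : (∫ y : ℝ, ‖g (a - y) - g (b - y)‖ * M')
        = M' * ∫ z : ℝ, ‖g (z + (a - b)) - g z‖ := by
      rw [integral_mul_const, mul_comm]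
      congr 1
      have := integral_sub_left_eq_self (fun z : ℝ => ‖g (z + (a - b)) - g z‖) volume b
      rw [← this]
      congr 1
      ext y
      congr 2 <;> ring_nf
    rw [dist_eq_norm, step1, hGdist]
    calc ‖∫ y : ℝ, (g (a - y) - g (b - y)) * σ y‖
        ≤ ∫ y : ℝ, ‖g (a - y) - g (b - y)‖ * M' := step2
      _ = M' * ∫ z : ℝ, ‖g (z + (a - b)) - g z‖ := step3
  -- uniform continuity
  have huc : UniformContinuous (conv g σ) := by
    rw [Metric.uniformContinuous_iff]
    intro ε hε
    have h0 : Tendsto G (𝓝 0) (𝓝 (G 0)) := hGcont.continuousAt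
    rw [Metric.tendsto_nhds_nhds] at h0
    obtain ⟨δ, hδ, hδ'⟩ := h0 (ε / M') (div_pos hε hM')
    refine ⟨δ, hδ, fun {a b} hab => ?_⟩
    have h1 : dist (a - b) 0 < δ := by
      simpa [Real.dist_eq, abs_sub_comm] using hab
    have h2 := hδ' h1
    calc dist (conv g σ a) (conv g σ b) ≤ M' * dist (G (a - b)) (G 0) := hdiff_bound a b
      _ < M' * (ε / M') := by exact mul_lt_mul_of_pos_left h2 hM'
      _ = ε := by field_simp
  have hconvCont : Continuous (conv g σ) := huc.continuous
  -- key identity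
  have hkey_le : ∀ a b : ℝ, a ≤ b →
      (∫ t in a..b, conv g σ t) = conv μ σ b - conv μ σ a := by
    intro a b hab
    have haesm : AEStronglyMeasurable (fun p : ℝ × ℝ => g (p.1 - p.2) * σ p.2)
        ((volume.restrict (Set.Ioc a b)).prod volume) :=
      ((hgm.comp (measurable_fst.sub measurable_snd)).mul
        (hσmeas.comp measurable_snd)).aestronglyMeasurable
    have hH : Integrable (fun p : ℝ × ℝ => g (p.1 - p.2) * σ p.2)
        ((volume.restrict (Set.Ioc a b)).prod volume) := by
      refine (integrable_prod_iff haesm).2 ⟨?_, ?_⟩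
      · exact Eventually.of_forall fun t => key_int g hμ'int t
      · have hbd : ∀ t : ℝ, (∫ y : ℝ, ‖g (t - y) * σ y‖) ≤ M' * ∫ z : ℝ, ‖g z‖ := by
          intro t
          have : (∫ y : ℝ, ‖g (t - y) * σ y‖) ≤ ∫ y : ℝ, ‖g (t - y)‖ * M' := by
            refine integral_mono (key_int g hμ'int t).norm
              ((hμ'int.comp_sub_left t).norm.mul_const M') ?_
            intro y
            simp only [norm_mul]
            exact mul_le_mul_of_nonneg_left (by simpa [Real.norm_eq_abs] using hσb' y)
              (norm_nonneg _)
          refine this.trans ?_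
          rw [integral_mul_const]
          have hts : (∫ y : ℝ, ‖g (t - y)‖) = ∫ z : ℝ, ‖g z‖ :=
            integral_sub_left_eq_self (fun z => ‖g z‖) volume t
          rw [hts, mul_comm]
        refine Integrable.mono' (integrable_const (M' * ∫ z : ℝ, ‖g z‖))
          haesm.norm.integral_prod_right' ?_
        refine Eventually.of_forall fun t => ?_
        rw [Real.norm_eq_abs, abs_of_nonneg (integral_nonneg fun y => norm_nonneg _)]
        exact hbd t
    calc (∫ t in a..b, conv g σ t)
        = ∫ t in Set.Ioc a b, ∫ y : ℝ, g (t - y) * σ y := by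
          rw [intervalIntegral.integral_of_le hab]; rfl
      _ = ∫ y : ℝ, ∫ t in Set.Ioc a b, g (t - y) * σ y := integral_integral_swap hH
      _ = ∫ y : ℝ, (μ (b - y) - μ (a - y)) * σ y := by
          refine integral_congr_ae (Eventually.of_forall fun y => ?_)
          have hFTC : (∫ t in a..b, g (t - y))
              = μ (b - y) - μ (a - y) := by
            refine intervalIntegral.integral_eq_sub_of_hasDerivAt
              (f := fun t => μ (t - y)) (f' := fun t => g (t - y)) (fun t _ => ?_) ?_
            · have h1 : HasDerivAt (fun t : ℝ => t - y) 1 t := (hasDerivAt_id t).sub_const y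
              have := ((hμdiff (t - y)).hasDerivAt).comp t h1
              simp at this; exact this
            · exact (hμ'int.comp_sub_right y).intervalIntegrable
          calc (∫ t in Set.Ioc a b, g (t - y) * σ y)
              = (∫ t in Set.Ioc a b, g (t - y)) * σ y := integral_mul_const _ _
            _ = (μ (b - y) - μ (a - y)) * σ y := by
                rw [← intervalIntegral.integral_of_le hab, hFTC]
      _ = conv μ σ b - conv μ σ a := by
          rw [show (fun y : ℝ => (μ (b - y) - μ (a - y)) * σ y)
              = fun y : ℝ => μ (b - y) * σ y - μ (a - y) * σ y by ext y; ring]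
          rw [integral_sub (key_int μ hμint b) (key_int μ hμint a)]
          rfl
  have hkey : ∀ x : ℝ, conv μ σ x = conv μ σ 0 + ∫ t in (0:ℝ)..x, conv g σ t := by
    intro x
    rcases le_total 0 x with h | h
    · rw [hkey_le 0 x h]; ring
    · rw [intervalIntegral.integral_symm, hkey_le x 0 h]; ring
  constructor
  · intro x
    have hd : HasDerivAt (fun u : ℝ => conv μ σ 0 + ∫ t in (0:ℝ)..u, conv g σ t)
        (conv g σ x) x := by
      refine HasDerivAt.const_add _ ?_
      exact intervalIntegral.integral_hasDerivAt_right
        (hconvCont.intervalIntegrable 0 x)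
        (hconvCont.stronglyMeasurableAtFilter _ _)
        hconvCont.continuousAt
    exact hd.congr_of_eventuallyEq (Eventually.of_forall fun u => hkey u)
  · exact huc
end

section
/- Let σ : ℝ → ℝ be a K-quantiser and let μ : ℝ → ℝ be a probability density which is differentiable at every point with integrable derivative μ'. Then the function x ↦ E_μ[σ(x−ν)] = (μ∗σ)(x) is differentiable at every point of ℝ, its derivative is bounded and continuous, and it satisfies d/dx (μ∗σ)(x) = (μ'∗σ)(x) for all x ∈ ℝ. -/
open MeasureTheory Topology Filter

/-- The Heaviside function `H_θ`: `0` for `x < θ`, `1` for `x ≥ θ`. -/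
noncomputable def heaviside (θ x : ℝ) : ℝ := if x < θ then 0 else 1

/-- The `K`-quantiser with levels `q 0 < … < q (K-1)` and thresholds `θ 1 < … < θ (K-1)`:
`σ(x) = q 0 + Σ_{k=1}^{K-1} (q k - q (k-1)) H_{θ k}(x)`. -/
noncomputable def quantiser (K : ℕ) (q θ : ℕ → ℝ) (x : ℝ) : ℝ :=
  q 0 + ∑ k ∈ Finset.Icc 1 (K - 1), (q k - q (k - 1)) * heaviside (θ k) x

lemma heaviside_eq (θ : ℝ) :
    heaviside θ = (Set.Ici θ).indicator (fun _ => (1 : ℝ)) := by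
  funext x
  simp only [heaviside, Set.indicator, Set.mem_Ici]
  rcases lt_or_ge x θ with h | h
  · simp [h, not_le.2 h]
  · simp [not_lt.2 h, h]

lemma heaviside_meas (θ : ℝ) : Measurable (heaviside θ) := by
  rw [heaviside_eq]
  exact measurable_const.indicator measurableSet_Ici

lemma heaviside_bdd (θ x : ℝ) : ‖heaviside θ x‖ ≤ 1 := by
  unfold heaviside; split_ifs <;> simp

lemma integrable_term {f : ℝ → ℝ} (hf : Integrable f) (x θ : ℝ) :
    Integrable (fun y => f (x - y) * heaviside θ y) := by
  have h1 : Integrable (fun y => f (x - y)) := hf.comp_sub_left x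
  have := h1.bdd_mul ((heaviside_meas θ).aestronglyMeasurable)
    (ae_of_all _ fun y => heaviside_bdd θ y)
  simpa [mul_comm] using this

lemma conv_heaviside (f : ℝ → ℝ) (x θ : ℝ) :
    ∫ y, f (x - y) * heaviside θ y = ∫ t in Set.Iic (x - θ), f t := by
  have h := integral_sub_left_eq_self (fun y => f (x - y) * heaviside θ y)
    MeasureTheory.volume x
  rw [← h]
  have hkey : ∀ y : ℝ, f (x - (x - y)) * heaviside θ (x - y)
      = (Set.Iic (x - θ)).indicator f y := by
    intro y
    simp only [sub_sub_cancel, heaviside, Set.indicator, Set.mem_Iic]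
    split_ifs with h1 h2 h2
    · exfalso; linarith
    · ring
    · ring
    · exfalso; linarith
  simp_rw [hkey]
  rw [integral_indicator measurableSet_Iic]

lemma conv_quantiser {f : ℝ → ℝ} (hf : Integrable f) (K : ℕ) (q θ : ℕ → ℝ) (x : ℝ) :
    conv f (quantiser K q θ) x =
      (∫ t, f t) * q 0 + ∑ k ∈ Finset.Icc 1 (K - 1),
        (q k - q (k - 1)) * ∫ t in Set.Iic (x - θ k), f t := by
  unfold conv quantiser
  have hsplit : ∀ y : ℝ,
      f (x - y) * (q 0 + ∑ k ∈ Finset.Icc 1 (K - 1), (q k - q (k - 1)) * heaviside (θ k) y)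
      = f (x - y) * q 0 + ∑ k ∈ Finset.Icc 1 (K - 1),
          (q k - q (k - 1)) * (f (x - y) * heaviside (θ k) y) := by
    intro y
    rw [mul_add, Finset.mul_sum]
    congr 1
    exact Finset.sum_congr rfl fun k _ => by ring
  simp_rw [hsplit]
  rw [integral_add ((hf.comp_sub_left x).mul_const _)
    (integrable_finset_sum _ fun k _ => (integrable_term hf x (θ k)).const_mul _),
    integral_finset_sum _ fun k _ => (integrable_term hf x (θ k)).const_mul _]
  congr 1
  · rw [integral_mul_const, integral_sub_left_eq_self f MeasureTheory.volume x]
  · refine Finset.sum_congr rfl fun k _ => ?_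
    rw [integral_const_mul, conv_heaviside f x (θ k)]

lemma hasDerivAt_Iic_integral {f : ℝ → ℝ} (hf : Integrable f) (hc : Continuous f)
    (θ x : ℝ) :
    HasDerivAt (fun u => ∫ t in Set.Iic (u - θ), f t) (f (x - θ)) x := by
  have hkey : ∀ z : ℝ, ∫ t in Set.Iic z, f t
      = (∫ t in Set.Iic 0, f t) + ∫ t in (0:ℝ)..z, f t := by
    intro z
    have := intervalIntegral.integral_Iic_sub_Iic hf.integrableOn hf.integrableOn
      (a := (0:ℝ)) (b := z)
    linarith
  have hG : HasDerivAt (fun z => ∫ t in (0:ℝ)..z, f t) (f (x - θ)) (x - θ) :=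
    intervalIntegral.integral_hasDerivAt_right hf.intervalIntegrable
      hc.stronglyMeasurable.stronglyMeasurableAtFilter hc.continuousAt
  have hcomp : HasDerivAt (fun u : ℝ => ∫ t in (0:ℝ)..(u - θ), f t) (f (x - θ)) x := by
    simpa [Function.comp_def] using hG.comp x ((hasDerivAt_id x).sub_const θ)
  have : (fun u : ℝ => ∫ t in Set.Iic (u - θ), f t)
      = fun u => (∫ t in Set.Iic 0, f t) + ∫ t in (0:ℝ)..(u - θ), f t :=
    funext fun u => hkey (u - θ)
  rw [this]
  exact hcomp.const_add _

lemma limit_zero_of_integrable_atTop {f : ℝ → ℝ} (hf : Integrable f) {L : ℝ}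
    (h : Tendsto f atTop (𝓝 L)) : L = 0 := by
  by_contra hL
  have hpos : 0 < |L| / 2 := by positivity
  have hev : ∀ᶠ x in atTop, |L| / 2 ≤ ‖f x‖ :=
    h.norm.eventually (eventually_ge_nhds (by simp only [Real.norm_eq_abs]; linarith))
  obtain ⟨a, ha⟩ := hev.exists_forall_of_atTop
  have hint : IntegrableOn (fun _ : ℝ => |L| / 2) (Set.Ici a) := by
    refine Integrable.mono' (hf.norm.restrict (s := Set.Ici a)) aestronglyMeasurable_const ?_
    refine (ae_restrict_iff' measurableSet_Ici).2 (ae_of_all _ fun x hx => ?_)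
    simpa [Real.norm_eq_abs, abs_of_nonneg hpos.le] using ha x hx
  rw [integrableOn_const_iff] at hint
  rcases hint with h1 | h1
  · exact absurd (enorm_eq_zero.1 h1) (ne_of_gt hpos)
  · simp [Real.volume_Ici] at h1

lemma limit_zero_of_integrable_atBot {f : ℝ → ℝ} (hf : Integrable f) {L : ℝ}
    (h : Tendsto f atBot (𝓝 L)) : L = 0 := by
  by_contra hL
  have hpos : 0 < |L| / 2 := by positivity
  have hev : ∀ᶠ x in atBot, |L| / 2 ≤ ‖f x‖ :=
    h.norm.eventually (eventually_ge_nhds (by simp only [Real.norm_eq_abs]; linarith))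
  obtain ⟨a, ha⟩ := hev.exists_forall_of_atBot
  have hint : IntegrableOn (fun _ : ℝ => |L| / 2) (Set.Iic a) := by
    refine Integrable.mono' (hf.norm.restrict (s := Set.Iic a)) aestronglyMeasurable_const ?_
    refine (ae_restrict_iff' measurableSet_Iic).2 (ae_of_all _ fun x hx => ?_)
    simpa [Real.norm_eq_abs, abs_of_nonneg hpos.le] using ha x hx
  rw [integrableOn_const_iff] at hint
  rcases hint with h1 | h1
  · exact absurd (enorm_eq_zero.1 h1) (ne_of_gt hpos)
  · simp [Real.volume_Iic] at h1

theorem stmt_4 (K : ℕ) (hK : 2 ≤ K) (q θ : ℕ → ℝ)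
    (hq : ∀ k, k + 1 ≤ K - 1 → q k < q (k + 1))
    (hθ : ∀ k, 1 ≤ k → k + 1 ≤ K - 1 → θ k < θ (k + 1))
    (μ : ℝ → ℝ) (hμ0 : ∀ t, 0 ≤ μ t)
    (hμint : Integrable μ) (hμ1 : ∫ t : ℝ, μ t = 1)
    (hμdiff : ∀ x, DifferentiableAt ℝ μ x)
    (hμ'int : Integrable (deriv μ)) :
    (∀ x : ℝ,
      HasDerivAt (conv μ (quantiser K q θ)) (conv (deriv μ) (quantiser K q θ) x) x) ∧
    (∃ C : ℝ, ∀ x : ℝ, |conv (deriv μ) (quantiser K q θ) x| ≤ C) ∧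
    Continuous (conv (deriv μ) (quantiser K q θ)) := by
  have hcontμ : Continuous μ := continuous_iff_continuousAt.2 fun x => (hμdiff x).continuousAt
  -- FTC-2 on intervals
  have hfth : ∀ a b : ℝ, ∫ t in a..b, deriv μ t = μ b - μ a := fun a b =>
    intervalIntegral.integral_eq_sub_of_hasDerivAt (fun x _ => (hμdiff x).hasDerivAt)
      hμ'int.intervalIntegrable
  -- μ tends to limits at ±∞ which must both be 0
  have hbotlim : Tendsto μ atBot (𝓝 (μ 0 - ∫ t in Set.Iic 0, deriv μ t)) := by
    have h1 := intervalIntegral_tendsto_integral_Iic (0:ℝ) hμ'int.integrableOn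
      tendsto_id
    exact (tendsto_const_nhds.sub h1).congr fun a => by simp [hfth]
  have htoplim : Tendsto μ atTop (𝓝 (μ 0 + ∫ t in Set.Ioi 0, deriv μ t)) := by
    have h1 := intervalIntegral_tendsto_integral_Ioi (0:ℝ) hμ'int.integrableOn
      tendsto_id
    exact (tendsto_const_nhds.add h1).congr fun b => by simp [hfth]
  have hbot0 : Tendsto μ atBot (𝓝 0) := by
    rwa [limit_zero_of_integrable_atBot hμint hbotlim] at hbotlim
  have htop0 : Tendsto μ atTop (𝓝 0) := by
    rwa [limit_zero_of_integrable_atTop hμint htoplim] at htoplim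
  -- ∫_{-∞}^z μ' = μ z
  have hIic : ∀ z : ℝ, ∫ t in Set.Iic z, deriv μ t = μ z := by
    intro z
    have h1 := intervalIntegral_tendsto_integral_Iic z hμ'int.integrableOn
      tendsto_id
    have h2 : Tendsto (fun a : ℝ => ∫ t in a..z, deriv μ t) atBot (𝓝 (μ z)) := by
      have heq : (fun a : ℝ => ∫ t in a..z, deriv μ t) = fun a => μ z - μ a := by
        funext a; rw [hfth]
      rw [heq]
      simpa using tendsto_const_nhds.sub hbot0
    exact tendsto_nhds_unique h1 h2
  -- ∫ μ' = 0
  have htotal : ∫ t : ℝ, deriv μ t = 0 := by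
    have h1 := intervalIntegral_tendsto_integral hμ'int
      tendsto_neg_atTop_atBot tendsto_id
    have h2 : Tendsto (fun b : ℝ => ∫ t in (-b)..b, deriv μ t) atTop (𝓝 0) := by
      have heq : (fun b : ℝ => ∫ t in (-b)..b, deriv μ t) = fun b => μ b - μ (-b) := by
        funext b; rw [hfth]
      rw [heq]
      simpa using htop0.sub (hbot0.comp tendsto_neg_atTop_atBot)
    exact tendsto_nhds_unique h1 h2
  -- explicit formula for conv (deriv μ) σ
  have hconv' : ∀ x : ℝ, conv (deriv μ) (quantiser K q θ) x
      = ∑ k ∈ Finset.Icc 1 (K - 1), (q k - q (k - 1)) * μ (x - θ k) := by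
    intro x
    rw [conv_quantiser hμ'int, htotal]
    simp only [zero_mul, zero_add]
    exact Finset.sum_congr rfl fun k _ => by rw [hIic]
  refine ⟨?_, ?_, ?_⟩
  · -- differentiability
    intro x
    have hfun : conv μ (quantiser K q θ)
        = fun u => (∫ t, μ t) * q 0 + ∑ k ∈ Finset.Icc 1 (K - 1),
            (q k - q (k - 1)) * ∫ t in Set.Iic (u - θ k), μ t :=
      funext fun u => conv_quantiser hμint K q θ u
    rw [hfun, hconv']
    refine HasDerivAt.const_add _ ?_
    exact HasDerivAt.fun_sum fun k _ =>
      (hasDerivAt_Iic_integral hμint hcontμ (θ k) x).const_mul _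
  · -- boundedness
    have hB : ∀ z : ℝ, |μ z| ≤ ∫ t : ℝ, ‖deriv μ t‖ := by
      intro z
      rw [← hIic z]
      have h1 : ‖∫ t in Set.Iic z, deriv μ t‖ ≤ ∫ t in Set.Iic z, ‖deriv μ t‖ :=
        norm_integral_le_integral_norm _
      rw [Real.norm_eq_abs] at h1
      exact h1.trans
        (setIntegral_le_integral hμ'int.norm (ae_of_all _ fun t => norm_nonneg _))
    refine ⟨(∑ k ∈ Finset.Icc 1 (K - 1), |q k - q (k - 1)|) * ∫ t : ℝ, ‖deriv μ t‖,
      fun x => ?_⟩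
    rw [hconv', Finset.sum_mul]
    calc |∑ k ∈ Finset.Icc 1 (K - 1), (q k - q (k - 1)) * μ (x - θ k)|
        ≤ ∑ k ∈ Finset.Icc 1 (K - 1), |(q k - q (k - 1)) * μ (x - θ k)| :=
          Finset.abs_sum_le_sum_abs _ _
      _ ≤ ∑ k ∈ Finset.Icc 1 (K - 1), |q k - q (k - 1)| * ∫ t : ℝ, ‖deriv μ t‖ := by
          refine Finset.sum_le_sum fun k _ => ?_
          rw [abs_mul]
          exact mul_le_mul_of_nonneg_left (hB _) (abs_nonneg _)
  · -- continuity
    have : conv (deriv μ) (quantiser K q θ)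
        = fun x => ∑ k ∈ Finset.Icc 1 (K - 1), (q k - q (k - 1)) * μ (x - θ k) :=
      funext hconv'
    rw [this]
    exact continuous_finset_sum _ fun k _ =>
      continuous_const.mul (hcontμ.comp (continuous_id.sub continuous_const))
end

section
/- (Compositional convergence of regularised quantised networks.) Let L ≥ 2 and n_0, …, n_L ≥ 1 be integers; for ℓ = 1, …, L fix a matrix W_ℓ ∈ ℝ^{n_ℓ × n_{ℓ−1}} and a vector b_ℓ ∈ ℝ^{n_ℓ}, and let S_ℓ(x) = W_ℓ x + b_ℓ. Fix an input x_0 ∈ ℝ^{n_0}, and define the quantised features by x_ℓ = H_0(S_ℓ(x_{ℓ−1})) componentwise for ℓ = 1, …, L, where H_0 is the Heaviside function. For each ℓ = 1, …, L suppose given: (a) a function λ_ℓ : (0,∞) → (0,∞) with λ_ℓ(λ) → 0 as λ → 0⁺; (b) a family of regularisations σ_η : ℝ → ℝ (η > 0), each σ_η being a strictly increasing continuous bijection of ℝ onto (0,1) (in particular 0 ≤ σ_η(s) ≤ 1 for all s, and the inverse σ_η^{−1} : (0,1) → ℝ is well-defined), such that σ_η(s) → H_0(s) as η → 0⁺ for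 every s ∈ ℝ; and (c) a convergence rate r_ℓ with r_ℓ(λ) > 0 for λ > 0. Define the regularised features by x̂_0(λ) = x_0 and x̂_ℓ(λ) = σ_{λ_ℓ(λ)}(S_ℓ(x̂_{ℓ−1}(λ))) componentwise. Assume that for every ε > 0 and every ℓ = 1, …, L: (i) σ_{λ_ℓ(λ)}^{−1}(ε r_ℓ(λ)) → 0 as λ → 0⁺; (ii) σ_{λ_ℓ(λ)}^{−1}(1 − ε r_ℓ(λ)) → 0 as λ → 0⁺; (iii) (1 − σ_{λ_ℓ(λ)}(0)) / r_ℓ(λ) → 0 as λ → 0⁺; and, for ℓ = 2, …, L, (iv) r_{ℓ−1}(λ) / σ_{λ_ℓ(λ)}^{−1}(1 − ε r_ℓ(λ)) → 0 as λ → 0⁺ (the denominator being nonzero for λ small enough). Then for every ℓ = 1, …, L the regularised features converge to the quantised features faster than the rate r_ℓ: ‖x̂_ℓ(λ) − x_ℓ‖ / r_ℓ(λ) → 0 as λ → 0⁺, where ‖·‖ is the Euclidean norm on ℝ^{n_ℓ}. -/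
open MeasureTheory Topology Filter

lemma aux_norm {ι : Type*} [Fintype ι] (d : ℝ → ι → ℝ) (r : ℝ → ℝ)
    (hr : ∀ᶠ l in 𝓝[>](0:ℝ), 0 < r l)
    (h : ∀ i, Tendsto (fun l => |d l i| / r l) (𝓝[>](0:ℝ)) (𝓝 0)) :
    Tendsto (fun l => Real.sqrt (∑ i, (d l i)^2) / r l) (𝓝[>](0:ℝ)) (𝓝 0) := by
  have hsum : Tendsto (fun l => ∑ i, |d l i| / r l) (𝓝[>](0:ℝ)) (𝓝 0) := by
    have := tendsto_finset_sum Finset.univ (fun i _ => h i)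
    simpa using this
  apply squeeze_zero' ?_ ?_ hsum
  · filter_upwards [hr] with l hl
    positivity
  · filter_upwards [hr] with l hl
    rw [← Finset.sum_div]
    have h1 : ∑ i, (d l i)^2 ≤ (∑ i, |d l i|)^2 := by
      have := Finset.sum_sq_le_sq_sum_of_nonneg
        (s := Finset.univ) (f := fun i => |d l i|) (fun i _ => abs_nonneg _)
      simpa [sq_abs] using this
    have h2 : Real.sqrt (∑ i, (d l i)^2) ≤ ∑ i, |d l i| := by
      calc Real.sqrt (∑ i, (d l i)^2) ≤ Real.sqrt ((∑ i, |d l i|)^2) := Real.sqrt_le_sqrt h1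
        _ = ∑ i, |d l i| := Real.sqrt_sq (Finset.sum_nonneg fun i _ => abs_nonneg _)
    exact div_le_div_of_nonneg_right h2 hl.le |>.trans_eq rfl

lemma aux_core (sig siginv : ℝ → ℝ → ℝ) (lam r : ℝ → ℝ)
    (hlam_pos : ∀ l : ℝ, 0 < l → 0 < lam l)
    (hsig_mono : ∀ η : ℝ, 0 < η → StrictMono (sig η))
    (hsig_range : ∀ η : ℝ, 0 < η → Set.range (sig η) = Set.Ioo 0 1)
    (hsig_inv : ∀ η : ℝ, 0 < η → ∀ y ∈ Set.Ioo (0:ℝ) 1, sig η (siginv η y) = y)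
    (hr_lim : Tendsto r (𝓝[>](0:ℝ)) (𝓝 0))
    (hr_pos : ∀ l : ℝ, 0 < l → 0 < r l)
    (hyp_i : ∀ ε : ℝ, 0 < ε → Tendsto (fun l => siginv (lam l) (ε * r l)) (𝓝[>](0:ℝ)) (𝓝 0))
    (hyp_ii : ∀ ε : ℝ, 0 < ε → Tendsto (fun l => siginv (lam l) (1 - ε * r l)) (𝓝[>](0:ℝ)) (𝓝 0))
    (shat : ℝ → ℝ) (s : ℝ) (δ : ℝ → ℝ)
    (hd : ∀ᶠ l in 𝓝[>](0:ℝ), |shat l - s| ≤ δ l)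
    (hδ0 : Tendsto δ (𝓝[>](0:ℝ)) (𝓝 0))
    (hδt : ∀ ε : ℝ, 0 < ε → ∀ᶠ l in 𝓝[>](0:ℝ), siginv (lam l) (1 - ε * r l) ≤ -δ l) :
    Tendsto (fun l => |sig (lam l) (shat l) - heaviside 0 s| / r l) (𝓝[>](0:ℝ)) (𝓝 0) := by
  have hmem : ∀ l, 0 < l → sig (lam l) (shat l) ∈ Set.Ioo (0:ℝ) 1 := fun l hl => by
    rw [← hsig_range (lam l) (hlam_pos l hl)]; exact Set.mem_range_self _
  rw [NormedAddCommGroup.tendsto_nhds_zero]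
  intro ε hε
  have hε2 : 0 < ε/2 := by linarith
  have hrs : ∀ᶠ l in 𝓝[>](0:ℝ), r l < 2/ε :=
    hr_lim.eventually (eventually_lt_nhds (by positivity))
  have herin : ∀ᶠ l in 𝓝[>](0:ℝ), (ε/2) * r l ∈ Set.Ioo (0:ℝ) 1 := by
    filter_upwards [self_mem_nhdsWithin, hrs] with l hl hrl
    have hrp := hr_pos l hl
    refine ⟨by positivity, ?_⟩
    have h1 : (ε/2) * r l < (ε/2) * (2/ε) := mul_lt_mul_of_pos_left hrl hε2
    have h2 : (ε/2) * (2/ε) = 1 := by field_simp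
    linarith
  rcases lt_trichotomy s 0 with hs | hs | hs
  · -- s < 0
    have hH : heaviside 0 s = 0 := by simp [heaviside, hs]
    have hu : ∀ᶠ l in 𝓝[>](0:ℝ), s/2 < siginv (lam l) ((ε/2) * r l) :=
      (hyp_i (ε/2) hε2).eventually (eventually_gt_nhds (by linarith))
    have hδs : ∀ᶠ l in 𝓝[>](0:ℝ), δ l < -s/2 :=
      hδ0.eventually (eventually_lt_nhds (by linarith))
    filter_upwards [self_mem_nhdsWithin, hd, hδs, hu, herin] with l hl hdl hδl hul hin
    have hrp := hr_pos l hl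
    have hη := hlam_pos l hl
    have h1 : shat l < siginv (lam l) ((ε/2) * r l) := by
      have := (abs_le.mp hdl).2
      linarith
    have h2 : sig (lam l) (shat l) < (ε/2) * r l := by
      have := (hsig_mono _ hη) h1
      rwa [hsig_inv _ hη _ hin] at this
    have h3 : 0 < sig (lam l) (shat l) := (hmem l hl).1
    rw [Real.norm_eq_abs, hH, sub_zero, abs_of_pos h3,
      abs_of_pos (div_pos h3 hrp), div_lt_iff₀ hrp]
    nlinarith
  · -- s = 0
    have hH : heaviside 0 s = 1 := by simp [heaviside, hs]
    filter_upwards [self_mem_nhdsWithin, hd, hδt (ε/2) hε2, herin] with l hl hdl htl hin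
    have hrp := hr_pos l hl
    have hη := hlam_pos l hl
    have hin' : (1 - (ε/2) * r l) ∈ Set.Ioo (0:ℝ) 1 := ⟨by linarith [hin.2], by linarith [hin.1]⟩
    have h1 : siginv (lam l) (1 - (ε/2) * r l) ≤ shat l := by
      have := (abs_le.mp hdl).1
      rw [hs] at this
      linarith
    have h2 : 1 - (ε/2) * r l ≤ sig (lam l) (shat l) := by
      have := (hsig_mono _ hη).monotone h1
      rwa [hsig_inv _ hη _ hin'] at this
    have h3 := (hmem l hl).2
    rw [Real.norm_eq_abs, hH]
    have habs : |sig (lam l) (shat l) - 1| = 1 - sig (lam l) (shat l) := by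
      rw [abs_of_nonpos (by linarith)]; ring
    rw [habs, abs_of_nonneg (div_nonneg (by linarith) hrp.le), div_lt_iff₀ hrp]
    nlinarith
  · -- s > 0
    have hH : heaviside 0 s = 1 := by simp [heaviside, not_lt_of_gt hs]
    have ht : ∀ᶠ l in 𝓝[>](0:ℝ), siginv (lam l) (1 - (ε/2) * r l) < s/2 :=
      (hyp_ii (ε/2) hε2).eventually (eventually_lt_nhds (by linarith))
    have hδs : ∀ᶠ l in 𝓝[>](0:ℝ), δ l < s/2 :=
      hδ0.eventually (eventually_lt_nhds (by linarith))
    filter_upwards [self_mem_nhdsWithin, hd, hδs, ht, herin] with l hl hdl hδl htl hin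
    have hrp := hr_pos l hl
    have hη := hlam_pos l hl
    have hin' : (1 - (ε/2) * r l) ∈ Set.Ioo (0:ℝ) 1 := ⟨by linarith [hin.2], by linarith [hin.1]⟩
    have h1 : siginv (lam l) (1 - (ε/2) * r l) ≤ shat l := by
      have := (abs_le.mp hdl).1
      linarith
    have h2 : 1 - (ε/2) * r l ≤ sig (lam l) (shat l) := by
      have := (hsig_mono _ hη).monotone h1
      rwa [hsig_inv _ hη _ hin'] at this
    have h3 := (hmem l hl).2
    rw [Real.norm_eq_abs, hH]
    have habs : |sig (lam l) (shat l) - 1| = 1 - sig (lam l) (shat l) := by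
      rw [abs_of_nonpos (by linarith)]; ring
    rw [habs, abs_of_nonneg (div_nonneg (by linarith) hrp.le), div_lt_iff₀ hrp]
    nlinarith

/-- Compositional convergence of regularised quantised networks.
Layers are indexed by `j = 1, …, L`; `lam j` is the regularisation-parameter schedule
`λ ↦ λ_j(λ)`, `sig j η` is the regularisation `σ_η` of the Heaviside used at layer `j`,
`siginv j η` is its inverse on `(0,1)`, and `r j` is the convergence rate of layer `j`.
`xq j` are the quantised features and `xr l j` the regularised features at noise
parameter `l`. -/
theorem stmt_11
    (L : ℕ) (hL : 2 ≤ L)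
    (n : ℕ → ℕ) (hn : ∀ j, 1 ≤ n j)
    (W : (j : ℕ) → Matrix (Fin (n j)) (Fin (n (j - 1))) ℝ)
    (bv : (j : ℕ) → Fin (n j) → ℝ)
    (x0 : Fin (n 0) → ℝ)
    -- quantised features
    (xq : (j : ℕ) → Fin (n j) → ℝ)
    (hxq0 : xq 0 = x0)
    (hxq : ∀ j, 1 ≤ j → j ≤ L → ∀ i,
      xq j i = heaviside 0 ((W j).mulVec (xq (j - 1)) i + bv j i))
    -- (a) regularisation-parameter schedules
    (lam : ℕ → ℝ → ℝ)
    (hlam_pos : ∀ j, ∀ l : ℝ, 0 < l → 0 < lam j l)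
    (hlam_lim : ∀ j, Tendsto (lam j) (𝓝[>] (0 : ℝ)) (𝓝 0))
    -- (b) the regularisations and their inverses
    (sig : ℕ → ℝ → ℝ → ℝ) (siginv : ℕ → ℝ → ℝ → ℝ)
    (hsig_mono : ∀ j, ∀ η : ℝ, 0 < η → StrictMono (sig j η))
    (hsig_cont : ∀ j, ∀ η : ℝ, 0 < η → Continuous (sig j η))
    (hsig_range : ∀ j, ∀ η : ℝ, 0 < η → Set.range (sig j η) = Set.Ioo 0 1)
    (hsig_inv : ∀ j, ∀ η : ℝ, 0 < η → ∀ y ∈ Set.Ioo (0 : ℝ) 1,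
      sig j η (siginv j η y) = y)
    (hsig_lim : ∀ j, ∀ s : ℝ,
      Tendsto (fun η => sig j η s) (𝓝[>] (0 : ℝ)) (𝓝 (heaviside 0 s)))
    -- (c) convergence rates
    (r : ℕ → ℝ → ℝ)
    (hr_cont : ∀ j, ContinuousOn (r j) (Set.Ici 0))
    (hr_mono : ∀ j, MonotoneOn (r j) (Set.Ici 0))
    (hr_lim : ∀ j, Tendsto (r j) (𝓝[>] (0 : ℝ)) (𝓝 0))
    (hr_pos : ∀ j, ∀ l : ℝ, 0 < l → 0 < r j l)
    -- regularised features
    (xr : ℝ → (j : ℕ) → Fin (n j) → ℝ)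
    (hxr0 : ∀ l : ℝ, xr l 0 = x0)
    (hxr : ∀ l : ℝ, 0 < l → ∀ j, 1 ≤ j → j ≤ L → ∀ i,
      xr l j i = sig j (lam j l) ((W j).mulVec (xr l (j - 1)) i + bv j i))
    -- hypotheses (i)-(iv)
    (hyp_i : ∀ j, 1 ≤ j → j ≤ L → ∀ ε : ℝ, 0 < ε →
      Tendsto (fun l => siginv j (lam j l) (ε * r j l)) (𝓝[>] (0 : ℝ)) (𝓝 0))
    (hyp_ii : ∀ j, 1 ≤ j → j ≤ L → ∀ ε : ℝ, 0 < ε →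
      Tendsto (fun l => siginv j (lam j l) (1 - ε * r j l)) (𝓝[>] (0 : ℝ)) (𝓝 0))
    (hyp_iii : ∀ j, 1 ≤ j → j ≤ L →
      Tendsto (fun l => (1 - sig j (lam j l) 0) / r j l) (𝓝[>] (0 : ℝ)) (𝓝 0))
    (hyp_iv : ∀ j, 2 ≤ j → j ≤ L → ∀ ε : ℝ, 0 < ε →
      Tendsto (fun l => r (j - 1) l / siginv j (lam j l) (1 - ε * r j l))
        (𝓝[>] (0 : ℝ)) (𝓝 0)) :
    ∀ j, 1 ≤ j → j ≤ L →
      Tendsto (fun l : ℝ => Real.sqrt (∑ i, (xr l j i - xq j i) ^ 2) / r j l)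
        (𝓝[>] (0 : ℝ)) (𝓝 0) := by
    -- eventual positivity of the rates
  have hrev : ∀ j, ∀ᶠ l in 𝓝[>](0:ℝ), 0 < r j l := by
    intro j
    filter_upwards [self_mem_nhdsWithin] with l hl using hr_pos j l hl
  -- the inverse point `t = siginv (1 - ε r)` is eventually negative
  have tneg : ∀ j, 1 ≤ j → j ≤ L → ∀ ε : ℝ, 0 < ε →
      ∀ᶠ l in 𝓝[>](0:ℝ), siginv j (lam j l) (1 - ε * r j l) < 0 := by
    intro j h1 hLj ε hε
    have hrs : ∀ᶠ l in 𝓝[>](0:ℝ), r j l < 1/ε :=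
      (hr_lim j).eventually (eventually_lt_nhds (by positivity))
    filter_upwards [self_mem_nhdsWithin,
      (hyp_iii j h1 hLj).eventually (eventually_lt_nhds hε), hrs] with l hl h3 hrl
    have hrp := hr_pos j l hl
    have hη := hlam_pos j l hl
    have her1 : ε * r j l < 1 := by
      have h1' : ε * r j l < ε * (1/ε) := mul_lt_mul_of_pos_left hrl hε
      have h2' : ε * (1/ε) = 1 := by field_simp
      linarith
    have hmemI : (1 - ε * r j l) ∈ Set.Ioo (0:ℝ) 1 :=
      ⟨by linarith, by nlinarith [mul_pos hε hrp]⟩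
    have hval := hsig_inv j _ hη _ hmemI
    have h3' : 1 - sig j (lam j l) 0 < ε * r j l := (div_lt_iff₀ hrp).mp h3
    have hlt : sig j (lam j l) (siginv j (lam j l) (1 - ε * r j l)) < sig j (lam j l) 0 := by
      rw [hval]; linarith
    exact ((hsig_mono j _ hη).lt_iff_lt).mp hlt
  -- one layer, given a uniform preactivation error bound δ
  have layer : ∀ j, 1 ≤ j → j ≤ L → ∀ δ : ℝ → ℝ,
      Tendsto δ (𝓝[>](0:ℝ)) (𝓝 0) →
      (∀ ε : ℝ, 0 < ε → ∀ᶠ l in 𝓝[>](0:ℝ), siginv j (lam j l) (1 - ε * r j l) ≤ -δ l) →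
      (∀ᶠ l in 𝓝[>](0:ℝ), ∀ i,
        |(W j).mulVec (xr l (j-1)) i - (W j).mulVec (xq (j-1)) i| ≤ δ l) →
      Tendsto (fun l => Real.sqrt (∑ i, (xr l j i - xq j i)^2) / r j l)
        (𝓝[>](0:ℝ)) (𝓝 0) := by
    intro j h1 hLj δ hδ0 hδt hbound
    apply aux_norm (fun l i => xr l j i - xq j i) (r j) (hrev j)
    intro i
    have hd : ∀ᶠ l in 𝓝[>](0:ℝ),
        |((W j).mulVec (xr l (j-1)) i + bv j i) - ((W j).mulVec (xq (j-1)) i + bv j i)| ≤ δ l := by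
      filter_upwards [hbound] with l hb
      simpa [add_sub_add_right_eq_sub] using hb i
    have hcore := aux_core (sig j) (siginv j) (lam j) (r j)
      (hlam_pos j) (hsig_mono j) (hsig_range j) (hsig_inv j) (hr_lim j) (hr_pos j)
      (hyp_i j h1 hLj) (hyp_ii j h1 hLj)
      (fun l => (W j).mulVec (xr l (j-1)) i + bv j i)
      ((W j).mulVec (xq (j-1)) i + bv j i) δ hd hδ0 hδt
    have heq : (fun l => |sig j (lam j l) ((W j).mulVec (xr l (j-1)) i + bv j i)
          - heaviside 0 ((W j).mulVec (xq (j-1)) i + bv j i)| / r j l)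
        =ᶠ[𝓝[>](0:ℝ)] (fun l => |xr l j i - xq j i| / r j l) := by
      filter_upwards [self_mem_nhdsWithin] with l hl
      rw [hxr l hl j h1 hLj i, hxq j h1 hLj i]
    exact Filter.Tendsto.congr' heq hcore
  -- main induction on layers
  intro j
  induction j with
  | zero => intro h; omega
  | succ m ih =>
    intro h1 hLj
    rcases Nat.eq_zero_or_pos m with hm | hm
    · subst hm
      apply layer 1 le_rfl hLj (fun _ => 0) tendsto_const_nhds
      · intro ε hε
        filter_upwards [tneg 1 le_rfl hLj ε hε] with l h
        simpa using h.le
      · apply Filter.Eventually.of_forall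
        intro l i
        simp only [Nat.sub_self, hxr0 l, hxq0, sub_self, abs_zero, le_refl]
    · have IH := ih hm (le_trans (Nat.le_succ m) hLj)
      set N : ℝ → ℝ := fun l => Real.sqrt (∑ i, (xr l m i - xq m i) ^ 2) with hN
      have hIH : Tendsto (fun l => N l / r m l) (𝓝[>](0:ℝ)) (𝓝 0) := IH
      have hN0 : ∀ l, 0 ≤ N l := fun l => Real.sqrt_nonneg _
      set C : ℝ := ∑ i, ∑ k, |W (m+1) i k| with hC
      have hC0 : 0 ≤ C := Finset.sum_nonneg fun i _ =>
        Finset.sum_nonneg fun k _ => abs_nonneg _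
      have hNlim : Tendsto N (𝓝[>](0:ℝ)) (𝓝 0) := by
        have hmul := hIH.mul (hr_lim m)
        rw [zero_mul] at hmul
        apply Filter.Tendsto.congr' ?_ hmul
        filter_upwards [self_mem_nhdsWithin] with l hl
        rw [div_mul_cancel₀ _ (hr_pos m l hl).ne']
      have hNle : ∀ᶠ l in 𝓝[>](0:ℝ), N l ≤ r m l := by
        filter_upwards [self_mem_nhdsWithin,
          hIH.eventually (eventually_lt_nhds one_pos)] with l hl h
        rw [div_lt_one (hr_pos m l hl)] at h
        exact h.le
      apply layer (m+1) (by omega) hLj (fun l => C * N l)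
      · simpa using hNlim.const_mul C
      · intro ε hε
        have h4 := hyp_iv (m+1) (by omega) hLj ε hε
        simp only [Nat.add_sub_cancel] at h4
        have h4a := h4.abs
        rw [abs_zero] at h4a
        have hsm : ∀ᶠ l in 𝓝[>](0:ℝ),
            |r m l / siginv (m+1) (lam (m+1) l) (1 - ε * r (m+1) l)| < 1/(C+1) :=
          h4a.eventually (eventually_lt_nhds (by positivity))
        filter_upwards [self_mem_nhdsWithin, tneg (m+1) (by omega) hLj ε hε, hsm, hNle]
          with l hl ht hs hnr
        have hrm := hr_pos m l hl
        have hCp : (0:ℝ) < C + 1 := by linarith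
        rw [abs_div, abs_of_pos hrm, abs_of_neg ht] at hs
        rw [div_lt_div_iff₀ (by linarith) hCp] at hs
        nlinarith [mul_le_mul_of_nonneg_left hnr hC0, hN0 l]
      · apply Filter.Eventually.of_forall
        intro l i
        have e1 : (W (m+1)).mulVec (xr l m) i = ∑ k, W (m+1) i k * xr l m k := rfl
        have e2 : (W (m+1)).mulVec (xq m) i = ∑ k, W (m+1) i k * xq m k := rfl
        have key : (W (m+1)).mulVec (xr l m) i - (W (m+1)).mulVec (xq m) i
            = ∑ k, W (m+1) i k * (xr l m k - xq m k) := by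
          rw [e1, e2, ← Finset.sum_sub_distrib]
          congr 1; funext k; ring
        have hstep : ∀ k, |xr l m k - xq m k| ≤ N l := by
          intro k
          rw [hN, ← Real.sqrt_sq_eq_abs]
          exact Real.sqrt_le_sqrt (Finset.single_le_sum
            (f := fun k => (xr l m k - xq m k)^2) (fun k _ => sq_nonneg _) (Finset.mem_univ k))
        calc |(W (m+1)).mulVec (xr l m) i - (W (m+1)).mulVec (xq m) i|
            = |∑ k, W (m+1) i k * (xr l m k - xq m k)| := by rw [key]
          _ ≤ ∑ k, |W (m+1) i k * (xr l m k - xq m k)| := Finset.abs_sum_le_sum_abs _ _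
          _ ≤ ∑ k, |W (m+1) i k| * N l := by
              apply Finset.sum_le_sum
              intro k _
              rw [abs_mul]
              exact mul_le_mul_of_nonneg_left (hstep k) (abs_nonneg _)
          _ = (∑ k, |W (m+1) i k|) * N l := by rw [Finset.sum_mul]
          _ ≤ C * N l := by
              apply mul_le_mul_of_nonneg_right ?_ (hN0 l)
              rw [hC]
              exact Finset.single_le_sum (f := fun i => ∑ k, |W (m+1) i k|)
                (fun i _ => Finset.sum_nonneg fun k _ => abs_nonneg _) (Finset.mem_univ i)
end

section
/- Let r be a convergence rate with r(λ) > 0 for λ > 0, and for each η > 0 let σ_η : ℝ → ℝ be a strictly increasing continuous bijection of ℝ onto (0,1) with inverse σ_η^{−1} : (0,1) → ℝ. Let λ ↦ η(λ) be a function (0,∞) → (0,∞). Suppose that for every ε > 0, σ_{η(λ)}^{−1}(1 − ε r(λ)) → 0 as λ → 0⁺ (the expression being defined for λ small enough that ε r(λ) < 1). Then for every s > 0, (1 − σ_{η(λ)}(s)) / r(λ) → 0 as λ → 0⁺. -/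
open MeasureTheory Topology Filter

theorem stmt_13 (r : ℝ → ℝ)
    (hr_cont : ContinuousOn r (Set.Ici 0)) (hr_mono : MonotoneOn r (Set.Ici 0))
    (hr_lim : Tendsto r (𝓝[>] (0 : ℝ)) (𝓝 0)) (hr_pos : ∀ l : ℝ, 0 < l → 0 < r l)
    (sig : ℝ → ℝ → ℝ) (siginv : ℝ → ℝ → ℝ)
    (hsig_mono : ∀ η : ℝ, 0 < η → StrictMono (sig η))
    (hsig_cont : ∀ η : ℝ, 0 < η → Continuous (sig η))
    (hsig_range : ∀ η : ℝ, 0 < η → Set.range (sig η) = Set.Ioo 0 1)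
    (hsig_inv : ∀ η : ℝ, 0 < η → ∀ y ∈ Set.Ioo (0 : ℝ) 1, sig η (siginv η y) = y)
    (eta : ℝ → ℝ) (heta : ∀ l : ℝ, 0 < l → 0 < eta l)
    (h : ∀ ε : ℝ, 0 < ε →
      Tendsto (fun l => siginv (eta l) (1 - ε * r l)) (𝓝[>] (0 : ℝ)) (𝓝 0)) :
    ∀ s : ℝ, 0 < s →
      Tendsto (fun l => (1 - sig (eta l) s) / r l) (𝓝[>] (0 : ℝ)) (𝓝 0) := by
  intro s hs
  rw [NormedAddCommGroup.tendsto_nhds_zero]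
  intro ε hε
  have h1 : ∀ᶠ l in 𝓝[>] (0 : ℝ), siginv (eta l) (1 - ε * r l) < s :=
    (h ε hε).eventually_lt_const hs
  have h2 : ∀ᶠ l in 𝓝[>] (0 : ℝ), r l < ε⁻¹ :=
    hr_lim.eventually_lt_const (by positivity)
  filter_upwards [h1, h2, self_mem_nhdsWithin] with l h1 h2 hl
  have hη := heta l hl
  have hrl := hr_pos l hl
  have hεr : 0 < ε * r l := by positivity
  have hεr1 : ε * r l < 1 := by
    calc ε * r l < ε * ε⁻¹ := by exact mul_lt_mul_of_pos_left h2 hε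
    _ = 1 := mul_inv_cancel₀ hε.ne'
  have hmem : (1 - ε * r l) ∈ Set.Ioo (0:ℝ) 1 := ⟨by linarith, by linarith⟩
  have key : sig (eta l) (siginv (eta l) (1 - ε * r l)) = 1 - ε * r l :=
    hsig_inv _ hη _ hmem
  have hlt : 1 - ε * r l < sig (eta l) s := key ▸ hsig_mono _ hη h1
  have hs1 : sig (eta l) s < 1 := by
    have : sig (eta l) s ∈ Set.Ioo (0:ℝ) 1 := by
      rw [← hsig_range _ hη]; exact Set.mem_range_self s
    exact this.2
  rw [Real.norm_eq_abs, abs_of_pos (div_pos (by linarith) hrl), div_lt_iff₀ hrl]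
  linarith
end

section
/- (Key inductive-step lemma at a threshold point.) Let r and r' be convergence rates with r(λ) > 0 and r'(λ) > 0 for λ > 0, and for each η > 0 let σ_η : ℝ → ℝ be a strictly increasing continuous bijection of ℝ onto (0,1) with inverse σ_η^{−1} : (0,1) → ℝ. Let λ ↦ η(λ) be a function (0,∞) → (0,∞). Assume: (i) (1 − σ_{η(λ)}(0)) / r(λ) → 0 as λ → 0⁺; and (ii) for every ε > 0, r'(λ) / σ_{η(λ)}^{−1}(1 − ε r(λ)) → 0 as λ → 0⁺ (note that (i) implies σ_{η(λ)}^{−1}(1 − ε r(λ)) < 0 for λ small enough, so the quotient is eventually defined and negative). Let ŝ : (0,∞) → ℝ be any function and C ≥ 0 a constant such that |ŝ(λ)| ≤ C · r'(λ) for all sufficiently small λ > 0. Then (1 − σ_{η(λ)}(ŝ(λ))) / r(λ) → 0 as λ → 0⁺. -/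
open MeasureTheory Topology Filter

theorem stmt_14 (r r' : ℝ → ℝ)
    (hr_cont : ContinuousOn r (Set.Ici 0)) (hr_mono : MonotoneOn r (Set.Ici 0))
    (hr_lim : Tendsto r (𝓝[>] (0 : ℝ)) (𝓝 0)) (hr_pos : ∀ l : ℝ, 0 < l → 0 < r l)
    (hr'_cont : ContinuousOn r' (Set.Ici 0)) (hr'_mono : MonotoneOn r' (Set.Ici 0))
    (hr'_lim : Tendsto r' (𝓝[>] (0 : ℝ)) (𝓝 0)) (hr'_pos : ∀ l : ℝ, 0 < l → 0 < r' l)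
    (sig : ℝ → ℝ → ℝ) (siginv : ℝ → ℝ → ℝ)
    (hsig_mono : ∀ η : ℝ, 0 < η → StrictMono (sig η))
    (hsig_cont : ∀ η : ℝ, 0 < η → Continuous (sig η))
    (hsig_range : ∀ η : ℝ, 0 < η → Set.range (sig η) = Set.Ioo 0 1)
    (hsig_inv : ∀ η : ℝ, 0 < η → ∀ y ∈ Set.Ioo (0 : ℝ) 1, sig η (siginv η y) = y)
    (eta : ℝ → ℝ) (heta : ∀ l : ℝ, 0 < l → 0 < eta l)
    (hyp_i : Tendsto (fun l => (1 - sig (eta l) 0) / r l) (𝓝[>] (0 : ℝ)) (𝓝 0))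
    (hyp_ii : ∀ ε : ℝ, 0 < ε →
      Tendsto (fun l => r' l / siginv (eta l) (1 - ε * r l)) (𝓝[>] (0 : ℝ)) (𝓝 0))
    (shat : ℝ → ℝ) (C : ℝ) (hC : 0 ≤ C)
    (hshat : ∀ᶠ l in 𝓝[>] (0 : ℝ), |shat l| ≤ C * r' l) :
    Tendsto (fun l => (1 - sig (eta l) (shat l)) / r l) (𝓝[>] (0 : ℝ)) (𝓝 0) := by
  rw [NormedAddCommGroup.tendsto_nhds_zero]
  intro ε hε
  have h1 := (NormedAddCommGroup.tendsto_nhds_zero.mp hyp_i) ε hε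
  have h2 := (NormedAddCommGroup.tendsto_nhds_zero.mp (hyp_ii ε hε)) (1 / (C + 1))
    (by positivity)
  have h3 : ∀ᶠ l in 𝓝[>] (0 : ℝ), r l < 1 / ε :=
    hr_lim.eventually (gt_mem_nhds (by positivity))
  filter_upwards [h1, h2, h3, hshat, self_mem_nhdsWithin] with l h1 h2 h3 hsh hl
  have hl : (0 : ℝ) < l := hl
  have hr : 0 < r l := hr_pos l hl
  have hr' : 0 < r' l := hr'_pos l hl
  have hη : 0 < eta l := heta l hl
  have hεr : ε * r l < 1 := by
    rw [lt_div_iff₀ hε] at h3; nlinarith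
  have hmem : 1 - ε * r l ∈ Set.Ioo (0 : ℝ) 1 := by
    constructor <;> nlinarith
  set s := siginv (eta l) (1 - ε * r l) with hs
  have hsig_s : sig (eta l) s = 1 - ε * r l := hsig_inv (eta l) hη _ hmem
  have hmem0 : sig (eta l) 0 ∈ Set.Ioo (0 : ℝ) 1 := by
    rw [← hsig_range (eta l) hη]; exact Set.mem_range_self 0
  have hmemsh : sig (eta l) (shat l) ∈ Set.Ioo (0 : ℝ) 1 := by
    rw [← hsig_range (eta l) hη]; exact Set.mem_range_self _
  -- from h1 : (1 - sig 0)/r < ε, so sig 0 > 1 - ε r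
  have h1' : 1 - sig (eta l) 0 < ε * r l := by
    rw [Real.norm_eq_abs, abs_div, abs_of_pos hr,
      abs_of_pos (by linarith [hmem0.2]), div_lt_iff₀ hr] at h1
    linarith [h1]
  -- sig s = 1 - ε r < sig 0, so s < 0
  have hs_neg : s < 0 := by
    have := (hsig_mono (eta l) hη).lt_iff_lt (a := s) (b := 0)
    rw [← this]
    linarith [hsig_s]
  -- from h2 : |r'/s| < 1/(C+1), with s < 0
  have h2' : (C + 1) * r' l < -s := by
    rw [Real.norm_eq_abs, abs_div, abs_of_pos hr', abs_of_neg hs_neg,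
      div_lt_div_iff₀ (by linarith) (by positivity)] at h2
    nlinarith
  have hs_lt : s < shat l := by
    have := abs_le.mp hsh
    nlinarith [this.1]
  have key : 1 - ε * r l < sig (eta l) (shat l) := by
    have := hsig_mono (eta l) hη hs_lt
    rw [hsig_s] at this; exact this
  rw [Real.norm_eq_abs, abs_div, abs_of_pos hr,
    abs_of_pos (by linarith [hmemsh.2]), div_lt_iff₀ hr]
  linarith
end
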